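/- For 0 < α < 1, the function ω(z) = (1-z)/(τ(1 - α/2 + (α/2)z)^{1/α}) satisfies ω(e^{-sτ}) = s + O(τ²|s|³) as sτ → 0; precisely, there exist r > 0 and C > 0 such that |ω(e^{-sτ}) - s| ≤ C τ² |s|³ for all complex s with |sτ| ≤ r. -/

import Mathlib

open Complex Filter Topology
set_option maxRecDepth 8000
set_option maxHeartbeats 1000000

variable (α : ℝ)

noncomputable def Bfun (w : ℂ) : ℂ := 1 - (α:ℂ)/2 + ((α:ℂ)/2) * Complex.exp (-w)
noncomputable def gfun (w : ℂ) : ℂ := (1 - Complex.exp (-w)) * (Bfun α w) ^ (-(1/(α:ℂ)))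

lemma hexp (w : ℂ) : HasDerivAt (fun w : ℂ => Complex.exp (-w)) (-Complex.exp (-w)) w := by
  simpa [Function.comp_def] using ((Complex.hasDerivAt_exp (-w)).comp w (hasDerivAt_neg w))

lemma hBderiv (w : ℂ) : HasDerivAt (Bfun α) (-((α:ℂ)/2) * Complex.exp (-w)) w := by
  unfold Bfun
  simpa [mul_comm, neg_mul, mul_neg] using (((hexp w).const_mul ((α:ℂ)/2)).const_add (1 - (α:ℂ)/2))

lemma hB0 : Bfun α 0 = 1 := by simp [Bfun]

lemma hBcont : Continuous (Bfun α) := by unfold Bfun; fun_prop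

lemma hslit : ∀ᶠ w in 𝓝 (0:ℂ), Bfun α w ∈ Complex.slitPlane := by
  have : (Bfun α) ⁻¹' Complex.slitPlane ∈ 𝓝 (0:ℂ) :=
    (hBcont α).continuousAt.preimage_mem_nhds
      (Complex.isOpen_slitPlane.mem_nhds (by rw [hB0]; exact Complex.one_mem_slitPlane))
  exact this

noncomputable def G1fun (w : ℂ) : ℂ :=
  Complex.exp (-w) * (Bfun α w) ^ (-(1/(α:ℂ))) +
    (1 - Complex.exp (-w)) *
      ((-(1/(α:ℂ))) * (Bfun α w) ^ (-(1/(α:ℂ)) - 1) * (-((α:ℂ)/2) * Complex.exp (-w)))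

lemma hg' : ∀ᶠ w in 𝓝 (0:ℂ), HasDerivAt (gfun α) (G1fun α w) w := by
  filter_upwards [hslit α] with w hw
  have h1 : HasDerivAt (fun w => (Bfun α w) ^ (-(1/(α:ℂ))))
      ((-(1/(α:ℂ))) * (Bfun α w) ^ (-(1/(α:ℂ)) - 1) * (-((α:ℂ)/2) * Complex.exp (-w))) w :=
    (hBderiv α w).cpow_const hw
  have h2 : HasDerivAt (fun w => 1 - Complex.exp (-w)) (Complex.exp (-w)) w := by
    simpa using (hexp w).const_sub 1
  exact h2.mul h1

lemma hg'cont : True := trivial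

lemma hG1deriv (hα0 : (α:ℂ) ≠ 0) : HasDerivAt (G1fun α) 0 0 := by
  have slit0 : Bfun α 0 ∈ Complex.slitPlane := by
    rw [hB0]; exact Complex.one_mem_slitPlane
  have he := hexp 0
  have hd1 := (hBderiv α 0).cpow_const (c := -(1/(α:ℂ))) slit0
  have hd2 := (hBderiv α 0).cpow_const (c := -(1/(α:ℂ)) - 1) slit0
  have hA : HasDerivAt (fun w : ℂ => 1 - Complex.exp (-w)) (Complex.exp (-(0:ℂ))) 0 := by
    simpa using he.const_sub 1
  have inner := (hd2.const_mul (-(1/(α:ℂ)))).mul (he.const_mul (-((α:ℂ)/2)))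
  have total := (he.mul hd1).add (hA.mul inner)
  refine HasDerivAt.congr_deriv (f := G1fun α) total ?_
  simp only [Pi.mul_apply, hB0, neg_zero, Complex.exp_zero, Complex.one_cpow, mul_one, one_mul]
  field_simp
  ring

lemma hganalytic : AnalyticAt ℂ (gfun α) 0 := by
  have hexp_an : AnalyticAt ℂ (fun w : ℂ => Complex.exp (-w)) 0 :=
    analyticAt_cexp.comp (analyticAt_id.neg)
  have hB_an : AnalyticAt ℂ (Bfun α) 0 :=
    (analyticAt_const.add (analyticAt_const.mul hexp_an))
  have slit0 : Bfun α 0 ∈ Complex.slitPlane := by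
    rw [hB0]; exact Complex.one_mem_slitPlane
  exact (analyticAt_const.sub hexp_an).mul (hB_an.cpow analyticAt_const slit0)

lemma key (hα0 : (α:ℂ) ≠ 0) :
    ∃ r : ℝ, 0 < r ∧ ∃ C : ℝ, 0 < C ∧ ∀ y : ℂ, ‖y‖ ≤ r → ‖gfun α y - y‖ ≤ C * ‖y‖ ^ 3 := by
  obtain ⟨p, hp⟩ := hganalytic α
  -- derivative values
  have hgd0 : HasDerivAt (gfun α) (G1fun α 0) 0 := (hg' α).self_of_nhds
  have hG10 : G1fun α 0 = 1 := by
    unfold G1fun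
    rw [hB0]
    simp
  have hderiv1 : deriv (gfun α) 0 = 1 := by rw [hgd0.deriv, hG10]
  have hderivEq : deriv (gfun α) =ᶠ[𝓝 (0:ℂ)] G1fun α := by
    filter_upwards [hg' α] with w hw using hw.deriv
  have hderiv2 : iteratedDeriv 2 (gfun α) 0 = 0 := by
    have : iteratedDeriv 2 (gfun α) 0 = deriv (deriv (gfun α)) 0 := by
      rw [iteratedDeriv_succ, iteratedDeriv_one]
    rw [this, hderivEq.deriv_eq, (hG1deriv α hα0).deriv]
  -- coefficients
  have hg0 : gfun α 0 = 0 := by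
    unfold gfun
    rw [hB0]
    simp
  have hc0 : p.coeff 0 = 0 := by
    have h := hp.coeff_zero 1
    rw [hg0] at h
    exact h
  have hc1 : p.coeff 1 = 1 := by
    have := hp.deriv
    rw [hderiv1] at this
    exact this.symm
  have hc2 : p.coeff 2 = 0 := by
    obtain ⟨R, hR⟩ := hp
    have h2 := hR.factorial_smul (1:ℂ) 2
    rw [← iteratedDeriv_eq_iteratedFDeriv, hderiv2] at h2
    have h3 : (Nat.factorial 2) • p.coeff 2 = 0 := by
      rw [FormalMultilinearSeries.coeff]
      rw [← h2]
      congr 1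
    simpa [Nat.factorial] using h3
  -- partial sum
  have hps : ∀ y : ℂ, p.partialSum 3 y = y := by
    intro y
    simp [FormalMultilinearSeries.partialSum, Finset.sum_range_succ,
      FormalMultilinearSeries.apply_eq_pow_smul_coeff, hc0, hc1, hc2]
  have hO := hp.isBigO_sub_partialSum_pow 3
  rw [Asymptotics.isBigO_iff] at hO
  obtain ⟨c, hc⟩ := hO
  rw [Metric.eventually_nhds_iff] at hc
  obtain ⟨ε, hε, hball⟩ := hc
  refine ⟨ε/2, by positivity, max c 1, lt_of_lt_of_le one_pos (le_max_right _ _), ?_⟩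
  intro y hy
  have hy' : dist y 0 < ε := by
    rw [dist_zero_right]; linarith
  have := hball hy'
  simp only [zero_add, hps] at this
  calc ‖gfun α y - y‖ ≤ c * ‖‖y‖ ^ 3‖ := this
    _ = c * ‖y‖ ^ 3 := by rw [Real.norm_of_nonneg (by positivity)]
    _ ≤ max c 1 * ‖y‖ ^ 3 := by
        apply mul_le_mul_of_nonneg_right (le_max_left _ _) (by positivity)

/-- The fractional Crank–Nicolson generating function
`ω(z) = (1-z)/(τ(1 - α/2 + (α/2)z)^{1/α})` satisfies
`|ω(e^{-sτ}) - s| ≤ Cτ²|s|³` for `|sτ| ≤ r`. -/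
theorem stmt_6 (α : ℝ) (hα : 0 < α) (hα1 : α < 1) :
    ∃ r : ℝ, 0 < r ∧ ∃ C : ℝ, 0 < C ∧ ∀ (τ : ℝ), 0 < τ → ∀ s : ℂ, ‖s * τ‖ ≤ r →
      ‖(1 - Complex.exp (-s * τ)) /
          ((τ : ℂ) * ((1 - α / 2 + (α / 2) * Complex.exp (-s * τ)) ^ ((1 : ℂ) / α)))
        - s‖ ≤ C * τ ^ 2 * ‖s‖ ^ 3 := by
  have hα0 : (α:ℂ) ≠ 0 := by exact_mod_cast hα.ne'
  obtain ⟨r, hr, C, hC, hkey⟩ := key α hα0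
  refine ⟨r, hr, C, hC, ?_⟩
  intro τ hτ s hs
  set y : ℂ := s * τ with hy
  have hτ0 : (τ:ℂ) ≠ 0 := by exact_mod_cast hτ.ne'
  have h1 : -s * (τ:ℂ) = -y := by rw [hy]; ring
  have hEq : (1 - Complex.exp (-s * τ)) /
          ((τ : ℂ) * ((1 - α / 2 + (α / 2) * Complex.exp (-s * τ)) ^ ((1 : ℂ) / α)))
        - s = (gfun α y - y) / τ := by
    have h2 : (1:ℂ) - (α:ℂ) / 2 + (α:ℂ) / 2 * Complex.exp (-y) = Bfun α y := rfl
    have hs' : s = y * ((τ:ℂ))⁻¹ := by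
      rw [hy]; field_simp
    rw [h1, h2]
    unfold gfun
    rw [Complex.cpow_neg, div_eq_mul_inv, mul_inv_rev, sub_div, div_eq_mul_inv, hs']
    ring
  rw [hEq]
  have hb := hkey y hs
  have hnorm_y : ‖y‖ = ‖s‖ * τ := by
    rw [hy, norm_mul, Complex.norm_real, Real.norm_of_nonneg hτ.le]
  have hdiv : ‖(gfun α y - y) / (τ:ℂ)‖ = ‖gfun α y - y‖ / τ := by
    rw [norm_div, Complex.norm_real, Real.norm_of_nonneg hτ.le]
  rw [hdiv]
  rw [div_le_iff₀ hτ]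
  calc ‖gfun α y - y‖ ≤ C * ‖y‖ ^ 3 := hb
    _ = C * τ ^ 2 * ‖s‖ ^ 3 * τ := by rw [hnorm_y]; ring
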